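/- Let a ∈ ℤ, m ≥ 1, and set G(m,a) = (a^{2m} − a^m)/2^{v₂(m)+1}, where v₂ is the 2-adic valuation. Then G(m,a) is an integer and: G(m,a) is even if a ≡ 0 or 1 (mod 4); G(m,a) is odd exactly when m ∈ {1,2} if a ≡ 2 (mod 4); and G(m,a) is odd exactly when m is odd if a ≡ 3 (mod 4). -/

import Mathlib

lemma aux_two_pow_gt (v : ℕ) (hv : 2 ≤ v) : v + 1 < 2 ^ v := by
  induction v with
  | zero => omega
  | succ n ih =>
    rcases Nat.lt_or_ge n 2 with h | h
    · interval_cases n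
      · omega
      · norm_num
    · have := ih h
      rw [pow_succ]; omega

lemma aux_L1 (a : ℤ) (ha : Odd a) : ∀ n : ℕ, 1 ≤ n →
    (2:ℤ) ^ (padicValNat 2 n + 3) ∣ a ^ (2 * n) - 1 := by
  intro n
  induction n using Nat.strong_induction_on with
  | _ n ih =>
    intro hn
    rcases Nat.even_or_odd n with he | ho
    · obtain ⟨k, hk⟩ := he
      have hk1 : 1 ≤ k := by omega
      have hvn : padicValNat 2 n = padicValNat 2 k + 1 := by
        rw [hk, show k + k = 2 * k from by ring,
          padicValNat.mul (by norm_num) (by omega), padicValNat.self (by norm_num)]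
        omega
      have hIH := ih k (by omega) hk1
      have h2 : (2:ℤ) ∣ a ^ (2 * k) + 1 := by
        obtain ⟨c, hc⟩ := ha.pow (n := 2 * k)
        exact ⟨c + 1, by omega⟩
      have hfac : a ^ (2 * n) - 1 = (a ^ (2 * k) - 1) * (a ^ (2 * k) + 1) := by
        rw [hk]; ring
      rw [hvn, hfac]
      calc (2:ℤ) ^ (padicValNat 2 k + 1 + 3) = 2 ^ (padicValNat 2 k + 3) * 2 := by ring
      _ ∣ (a ^ (2 * k) - 1) * (a ^ (2 * k) + 1) := mul_dvd_mul hIH h2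
    · have hv0 : padicValNat 2 n = 0 := padicValNat.eq_zero_of_not_dvd (by
        rw [Nat.odd_iff] at ho; omega)
      rw [hv0]
      obtain ⟨k, hk⟩ := ha
      have h8 : (8:ℤ) ∣ a ^ 2 - 1 := by
        obtain ⟨t, ht⟩ := Int.even_mul_succ_self k
        exact ⟨t, by rw [hk]; linear_combination 4 * ht⟩
      have hmod : Int.ModEq 8 (a ^ 2) 1 :=
        (Int.modEq_iff_dvd.mpr (by simpa using h8)).symm
      have hdvd : (8:ℤ) ∣ (a ^ 2) ^ n - 1 := by
        have h' := (hmod.pow n).symm.dvd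
        simpa using h'
      rw [pow_mul]
      norm_num
      exact hdvd

theorem G_parity_rank_one (a : ℤ) (m : ℕ) (hm : 1 ≤ m) :
    ∃ g : ℤ, a ^ (2 * m) - a ^ m = 2 ^ (padicValNat 2 m + 1) * g ∧
      ((a % 4 = 0 ∨ a % 4 = 1) → Even g) ∧
      (a % 4 = 2 → (Odd g ↔ (m = 1 ∨ m = 2))) ∧
      (a % 4 = 3 → (Odd g ↔ Odd m)) := by
  have hfac : a ^ (2 * m) - a ^ m = a ^ m * (a ^ m - 1) := by
    rw [two_mul, pow_add]; ring
  set v := padicValNat 2 m with hv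
  have hvle : 2 ^ v ≤ m := Nat.le_of_dvd (by omega) pow_padicValNat_dvd
  have hvlt : v < 2 ^ v := Nat.lt_two_pow_self (n := v)
  have hv1m : v + 1 ≤ m := by omega
  rcases Int.even_or_odd a with hae | hao
  · -- a even
    have ha2 : a % 2 = 0 := Int.even_iff.mp hae
    have h04 : a % 4 = 0 ∨ a % 4 = 2 := by omega
    rcases h04 with h0 | h2
    · -- a ≡ 0 (mod 4)
      obtain ⟨b, hb⟩ : ∃ b, a = 4 * b := ⟨a / 4, by omega⟩
      have hd : (2:ℤ) ^ (v + 2) ∣ a ^ m := by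
        have h1 : (2:ℤ) ^ (v + 2) ∣ 2 ^ (2 * m) := pow_dvd_pow 2 (by omega)
        have h2 : (2:ℤ) ^ (2 * m) ∣ a ^ m := by
          rw [hb, show (4:ℤ) * b = 2 ^ 2 * b from by norm_num, mul_pow, ← pow_mul]
          exact Dvd.intro _ rfl
        exact h1.trans h2
      obtain ⟨c, hc⟩ := hd.trans (Dvd.intro _ rfl : a ^ m ∣ a ^ m * (a ^ m - 1))
      refine ⟨2 * c, ?_, fun _ => even_two_mul c, fun h => by omega, fun h => by omega⟩
      rw [hfac, hc]; ring
    · -- a ≡ 2 (mod 4)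
      obtain ⟨u, hu, hu2⟩ : ∃ u, a = 2 * u ∧ u % 2 = 1 := ⟨a / 2, by omega, by omega⟩
      have huo : Odd u := Int.odd_iff.mpr hu2
      have ham : a ^ m % 2 = 0 := by
        have : (2:ℤ) ∣ a ^ m := dvd_pow (⟨u, hu⟩ : (2:ℤ) ∣ a) (by omega)
        omega
      have hodd1 : Odd (a ^ m - 1) := Int.odd_iff.mpr (by omega)
      have hx : Odd (u ^ m * (a ^ m - 1)) := (huo.pow).mul hodd1
      refine ⟨2 ^ (m - (v + 1)) * (u ^ m * (a ^ m - 1)), ?_, fun h => by omega, ?_,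
        fun h => by omega⟩
      · rw [hfac, hu, mul_pow, ← mul_assoc, ← mul_assoc, ← pow_add,
          Nat.add_sub_cancel' hv1m]
      · intro _
        constructor
        · intro hg
          -- odd forces m - (v+1) = 0
          have he : m - (v + 1) = 0 := by
            by_contra hne
            have : (2:ℤ) ∣ 2 ^ (m - (v + 1)) * (u ^ m * (a ^ m - 1)) :=
              dvd_mul_of_dvd_left (dvd_pow_self 2 hne) _
            rw [Int.odd_iff] at hg; omega
          have hmv : m = v + 1 := by omega
          -- then 2^v = v + 1, so v ≤ 1
          have h2v : 2 ^ v = v + 1 := by omega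
          have hvle1 : v ≤ 1 := by
            by_contra hgt
            have := aux_two_pow_gt v (by omega)
            omega
          interval_cases v
          · left; omega
          · right; omega
        · intro hm12
          have hv01 : v + 1 = m := by
            rcases hm12 with rfl | rfl
            · simp [hv]
            · rw [hv, padicValNat.self (by norm_num)]
          rw [show m - (v + 1) = 0 from by omega, pow_zero, one_mul]
          exact hx
  · -- a odd
    have ha2 : a % 2 = 1 := Int.odd_iff.mp hao
    rcases Nat.even_or_odd m with hme | hmo
    · -- m even
      obtain ⟨n, hn⟩ := hme
      have hn1 : 1 ≤ n := by omega
      have hvm : v = padicValNat 2 n + 1 := by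
        rw [hv, hn, show n + n = 2 * n from by ring,
          padicValNat.mul (by norm_num) (by omega), padicValNat.self (by norm_num)]
        omega
      have hL := aux_L1 a hao n hn1
      have hdvd : (2:ℤ) ^ (v + 2) ∣ a ^ m - 1 := by
        rw [hvm]
        calc (2:ℤ) ^ (padicValNat 2 n + 1 + 2) ∣ 2 ^ (padicValNat 2 n + 3) :=
              pow_dvd_pow 2 (by omega)
        _ ∣ a ^ (2 * n) - 1 := hL
        _ = a ^ m - 1 := by rw [hn, two_mul]
      obtain ⟨c, hc⟩ := hdvd.trans (Dvd.intro_left _ rfl : a ^ m - 1 ∣ a ^ m * (a ^ m - 1))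
      refine ⟨2 * c, ?_, fun _ => even_two_mul c, fun h => by omega, ?_⟩
      · rw [hfac, hc]; ring
      · intro _
        constructor
        · intro hg; exact absurd hg (Int.not_odd_iff_even.mpr (even_two_mul c))
        · intro hmo'; exact absurd hmo' (Nat.not_odd_iff_even.mpr ⟨n, hn⟩)
    · -- m odd
      have hv0 : v = 0 := padicValNat.eq_zero_of_not_dvd (by
        rw [Nat.odd_iff] at hmo; omega)
      rw [hv0]
      have h13 : a % 4 = 1 ∨ a % 4 = 3 := by omega
      rcases h13 with h1 | h3
      · -- a ≡ 1 (mod 4)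
        have hmod : Int.ModEq 4 1 a := Int.modEq_iff_dvd.mpr (by omega)
        have hd : (4:ℤ) ∣ a ^ m - 1 := by
          have := (hmod.pow m).dvd
          simpa using this
        obtain ⟨c, hc⟩ := hd
        refine ⟨2 * (a ^ m * c), ?_, fun _ => even_two_mul _, fun h => by omega,
          fun h => by omega⟩
        rw [hfac, hc]; ring
      · -- a ≡ 3 (mod 4)
        have hmod : Int.ModEq 4 a (-1) := by
          unfold Int.ModEq; omega
        have hpm : Int.ModEq 4 (a ^ m) (-1) := by
          have := hmod.pow m
          rwa [hmo.neg_one_pow] at this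
        have hd : (4:ℤ) ∣ a ^ m + 1 := by
          have := hpm.dvd
          have h4 : (4:ℤ) ∣ -1 - a ^ m := this
          obtain ⟨t, ht⟩ := h4
          exact ⟨-t, by omega⟩
        obtain ⟨c, hc⟩ := hd
        have hg : a ^ m - 1 = 2 * (2 * c - 1) := by omega
        refine ⟨a ^ m * (2 * c - 1), ?_, fun h => by omega, fun h => by omega, ?_⟩
        · rw [hfac, hg]; ring
        · intro _
          constructor
          · intro _; exact hmo
          · intro _
            exact (hao.pow).mul ⟨c - 1, by ring⟩
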